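/- Let r > 0, let f be holomorphic on a neighborhood of the closed disc {z ∈ ℂ : |z| ≤ r}, and let g be continuous on the closed disc with |f(z)| > |g(z)| for |z| = r. Suppose α ∈ ℂ satisfies 0 < |α| < inf_{|z|=r} (|f(z)| − |g(z)|). If f has a zero in the open disc {|z| < r}, then there exists z' with |z'| < r such that f(z') − g(z') = α. -/

import Mathlib

open Metric Complex Set Function

noncomputable section
namespace RoucheAux

/-- Circle parametrization of radius `r`. -/
def cir (r : ℝ) (t : ℝ) : ℂ := (r : ℂ) * Complex.exp (((2 * Real.pi * t : ℝ) : ℂ) * Complex.I)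

lemma cir_continuous (r : ℝ) : Continuous (cir r) := by
  apply continuous_const.mul
  exact Complex.continuous_exp.comp ((Complex.continuous_ofReal.comp (by continuity)).mul continuous_const)

lemma abs_cir (r : ℝ) (hr : 0 ≤ r) (t : ℝ) : ‖cir r t‖ = r := by
  rw [cir, norm_mul, Complex.norm_real, Real.norm_eq_abs, Complex.norm_exp_ofReal_mul_I, mul_one,
    _root_.abs_of_nonneg hr]

lemma cir_loop (r : ℝ) : cir r 1 = cir r 0 := by
  simp only [cir]
  congr 1
  rw [show (((2 * Real.pi * 1 : ℝ)) : ℂ) * Complex.I = 2 * Real.pi * Complex.I by push_cast; ring,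
    Complex.exp_two_pi_mul_I, show (((2 * Real.pi * 0 : ℝ)) : ℂ) * Complex.I = 0 by push_cast; ring,
    Complex.exp_zero]

lemma cir_mem_sphere (r : ℝ) (hr : 0 ≤ r) (t : ℝ) : cir r t ∈ sphere (0 : ℂ) r := by
  simp [mem_sphere_iff_norm, abs_cir r hr]

/-- `γ` winds `k` times around the origin over `t ∈ [0,1]`. -/
def HasWind (γ : ℝ → ℂ) (k : ℤ) : Prop :=
  ∃ ℓ : ℝ → ℂ, ContinuousOn ℓ (Icc 0 1) ∧ (∀ t ∈ Icc (0:ℝ) 1, Complex.exp (ℓ t) = γ t) ∧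
    ℓ 1 - ℓ 0 = 2 * Real.pi * Complex.I * k


lemma hasWind_unique {γ : ℝ → ℂ} {k k' : ℤ} (h : HasWind γ k) (h' : HasWind γ k') : k = k' := by
  obtain ⟨ℓ, hc, he, hd⟩ := h
  obtain ⟨ℓ', hc', he', hd'⟩ := h'
  -- the difference is valued in 2πiℤ
  have hint : ∀ t ∈ Icc (0:ℝ) 1, ∃ n : ℤ, ℓ t - ℓ' t = n * (2 * Real.pi * Complex.I) := by
    intro t ht
    rw [← Complex.exp_eq_one_iff, Complex.exp_sub, he t ht, he' t ht, div_self]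
    rw [← he t ht]
    exact Complex.exp_ne_zero _
  set u : ℝ → ℝ := fun t => (ℓ t - ℓ' t).im / (2 * Real.pi) with hu
  have hπ : (0:ℝ) < 2 * Real.pi := by positivity
  have hui : ∀ t ∈ Icc (0:ℝ) 1, ∃ n : ℤ, u t = n := by
    intro t ht
    obtain ⟨n, hn⟩ := hint t ht
    refine ⟨n, ?_⟩
    rw [hu]
    simp only [hn]
    rw [show ((n : ℂ) * (2 * Real.pi * Complex.I)).im = n * (2 * Real.pi) by simp]
    field_simp
  have hcu : ContinuousOn u (Icc 0 1) :=
    (Complex.continuous_im.comp_continuousOn (hc.sub hc')).div_const _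
  -- u 1 = u 0 by the intermediate value theorem
  have key : u 1 = u 0 := by
    obtain ⟨n1, hn1⟩ := hui 1 (by norm_num)
    obtain ⟨n0, hn0⟩ := hui 0 (by norm_num)
    rcases lt_trichotomy (u 0) (u 1) with hlt | heq | hlt
    · exfalso
      have hn : (n0 : ℝ) < n1 := by rw [← hn0, ← hn1]; exact hlt
      have hn' : (n0 : ℝ) + 1 ≤ n1 := by exact_mod_cast (by exact_mod_cast hn : n0 < n1)
      have hmem : (n0 : ℝ) + 1/2 ∈ Icc (u 0) (u 1) := by
        constructor
        · rw [hn0]; linarith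
        · rw [hn1]; linarith
      obtain ⟨t, ht, hut⟩ := intermediate_value_Icc (by norm_num : (0:ℝ) ≤ 1) hcu hmem
      obtain ⟨m, hm⟩ := hui t ht
      rw [hm] at hut
      have : (2*m : ℝ) = 2*n0 + 1 := by linarith
      have : (2*m : ℤ) = 2*n0 + 1 := by exact_mod_cast this
      omega
    · exact heq.symm
    · exfalso
      have hn : (n1 : ℝ) < n0 := by rw [← hn0, ← hn1]; exact hlt
      have hn' : (n1 : ℝ) + 1 ≤ n0 := by exact_mod_cast (by exact_mod_cast hn : n1 < n0)
      have hmem : (n1 : ℝ) + 1/2 ∈ Icc (u 1) (u 0) := by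
        constructor
        · rw [hn1]; linarith
        · rw [hn0]; linarith
      obtain ⟨t, ht, hut⟩ := intermediate_value_Icc' (by norm_num : (0:ℝ) ≤ 1) hcu hmem
      obtain ⟨m, hm⟩ := hui t ht
      rw [hm] at hut
      have : (2*m : ℝ) = 2*n1 + 1 := by linarith
      have : (2*m : ℤ) = 2*n1 + 1 := by exact_mod_cast this
      omega
  have hδ : ℓ 1 - ℓ' 1 = ℓ 0 - ℓ' 0 := by
    obtain ⟨m1, hm1⟩ := hint 1 (by norm_num)
    obtain ⟨m0, hm0⟩ := hint 0 (by norm_num)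
    have h1 : u 1 = m1 := by rw [hu]; simp only [hm1]; rw [show ((m1 : ℂ) * (2 * Real.pi * Complex.I)).im = m1 * (2 * Real.pi) by simp]; field_simp
    have h0 : u 0 = m0 := by rw [hu]; simp only [hm0]; rw [show ((m0 : ℂ) * (2 * Real.pi * Complex.I)).im = m0 * (2 * Real.pi) by simp]; field_simp
    have : (m1 : ℝ) = m0 := by rw [← h1, ← h0, key]
    have : m1 = m0 := by exact_mod_cast this
    rw [hm1, hm0, this]
  have : 2 * Real.pi * Complex.I * k = 2 * Real.pi * Complex.I * k' := by
    rw [← hd, ← hd']; linear_combination hδ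
  have h2πI : (2 * Real.pi * Complex.I : ℂ) ≠ 0 := by
    simp [Complex.I_ne_zero, Real.pi_ne_zero]
  exact_mod_cast mul_left_cancel₀ h2πI this


lemma HasWind.mul {γ δ : ℝ → ℂ} {j k : ℤ} (h : HasWind γ j) (h' : HasWind δ k) :
    HasWind (fun t => γ t * δ t) (j + k) := by
  obtain ⟨ℓ, hc, he, hd⟩ := h
  obtain ⟨ℓ', hc', he', hd'⟩ := h'
  refine ⟨fun t => ℓ t + ℓ' t, hc.add hc', fun t ht => ?_, ?_⟩
  · rw [Complex.exp_add, he t ht, he' t ht]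
  · push_cast
    linear_combination hd + hd'

lemma hasWind_const (a : ℂ) (ha : a ≠ 0) : HasWind (fun _ => a) 0 :=
  ⟨fun _ => Complex.log a, continuousOn_const, fun t _ => Complex.exp_log ha, by simp⟩

lemma re_pos_of_abs_lt_one {w : ℂ} (hw : ‖w - 1‖ < 1) : 0 < w.re := by
  have h1 : (1 - w).re ≤ ‖1 - w‖ := Complex.re_le_norm _
  have h2 : ‖1 - w‖ = ‖w - 1‖ := by
    rw [norm_sub_rev]
  have : (1 - w).re = 1 - w.re := by simp
  linarith [h2 ▸ h1, this ▸ h1]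

/-- Transport of winding number along a pointwise-close deformation. -/
lemma HasWind.transport {γ δ : ℝ → ℂ} {k : ℤ} (h : HasWind γ k)
    (hγl : γ 1 = γ 0) (hδc : ContinuousOn δ (Icc 0 1)) (hδl : δ 1 = δ 0)
    (hlt : ∀ t ∈ Icc (0:ℝ) 1, ‖δ t - γ t‖ < ‖γ t‖) :
    HasWind δ k := by
  obtain ⟨ℓ, hc, he, hd⟩ := h
  have hγc : ContinuousOn γ (Icc 0 1) :=
    (Complex.continuous_exp.comp_continuousOn hc).congr fun t ht => (he t ht).symm
  have hγne : ∀ t ∈ Icc (0:ℝ) 1, γ t ≠ 0 := by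
    intro t ht
    rw [← he t ht]; exact Complex.exp_ne_zero _
  have hwlt : ∀ t ∈ Icc (0:ℝ) 1, ‖δ t / γ t - 1‖ < 1 := by
    intro t ht
    have := hlt t ht
    have hγpos : 0 < ‖γ t‖ := (norm_nonneg _).trans_lt this
    rw [div_sub_one (hγne t ht), norm_div, div_lt_one hγpos]
    exact this
  have hwne : ∀ t ∈ Icc (0:ℝ) 1, δ t / γ t ≠ 0 := by
    intro t ht hz
    have := hwlt t ht
    rw [hz] at this
    simp at this
  refine ⟨fun t => ℓ t + Complex.log (δ t / γ t), ?_, fun t ht => ?_, ?_⟩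
  · refine hc.add ?_
    intro t ht
    refine (continuousAt_clog ?_).comp_continuousWithinAt
      ((hδc t ht).div (hγc t ht) (hγne t ht))
    exact Complex.mem_slitPlane_iff.mpr (Or.inl (re_pos_of_abs_lt_one (hwlt t ht)))
  · rw [Complex.exp_add, he t ht, Complex.exp_log (hwne t ht),
      mul_div_cancel₀ _ (hγne t ht)]
  · have h10 : δ 1 / γ 1 = δ 0 / γ 0 := by rw [hγl, hδl]
    show ℓ 1 + Complex.log (δ 1 / γ 1) - (ℓ 0 + Complex.log (δ 0 / γ 0)) = _
    rw [h10]
    linear_combination hd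


/-- A function continuous and nonvanishing on the closed disc has winding number `0`
on the boundary circle. -/
lemma hasWind_zero_of_nonvanishing {r : ℝ} (hr : 0 < r) {ψ : ℂ → ℂ}
    (hc : ContinuousOn ψ (closedBall 0 r)) (hne : ∀ z ∈ closedBall (0:ℂ) r, ψ z ≠ 0) :
    HasWind (fun t => ψ (cir r t)) 0 := by
  -- minimum modulus on the closed ball
  obtain ⟨x₀, hx₀, hmin⟩ := (isCompact_closedBall (0:ℂ) r).exists_isMinOn
    ⟨0, mem_closedBall_self hr.le⟩ (continuous_norm.comp_continuousOn hc)
  set m : ℝ := ‖ψ x₀‖ with hm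
  have hmpos : 0 < m := by
    have := hne x₀ hx₀
    simpa [hm, AbsoluteValue.pos_iff] using this
  -- uniform continuity
  obtain ⟨d, hd, hdd⟩ := Metric.uniformContinuousOn_iff.mp
    ((isCompact_closedBall (0:ℂ) r).uniformContinuousOn_of_continuous hc) m hmpos
  obtain ⟨n, hn⟩ := exists_nat_gt (r / d)
  have hn0 : 0 < (n:ℝ) := lt_trans (by positivity) hn
  have hrn : r / n < d := by
    rw [div_lt_iff₀ hn0]
    rw [div_lt_iff₀ hd] at hn
    linarith [hn]
  have hmem : ∀ (s : ℝ), 0 ≤ s → s ≤ 1 → ∀ t : ℝ, ((s:ℂ)) * cir r t ∈ closedBall (0:ℂ) r := by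
    intro s h0 h1 t
    rw [mem_closedBall_zero_iff, norm_mul, Complex.norm_real, Real.norm_eq_abs,
      abs_cir r hr.le, _root_.abs_of_nonneg h0]
    nlinarith
  have key : ∀ k : ℕ, k ≤ n → HasWind (fun t => ψ ((((k:ℝ)/(n:ℝ) : ℝ) : ℂ) * cir r t)) 0 := by
    intro k
    induction k with
    | zero =>
      intro _
      simp only [Nat.cast_zero, zero_div, Complex.ofReal_zero, zero_mul]
      exact hasWind_const _ (hne 0 (mem_closedBall_self hr.le))
    | succ k IH =>
      intro hk1
      rw [show ((k+1 : ℕ):ℝ) = ((k:ℝ)+1) by push_cast; ring]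
      have hk : k ≤ n := le_of_lt (Nat.lt_of_succ_le hk1)
      have hk0 : (0:ℝ) ≤ (k:ℝ)/(n:ℝ) := by positivity
      have hk1' : ((k:ℝ)+1)/(n:ℝ) ≤ 1 := by
        rw [div_le_one hn0]
        exact_mod_cast hk1
      have hkk : (k:ℝ)/(n:ℝ) ≤ 1 := by
        rw [div_le_one hn0]
        exact_mod_cast hk
      have hk0' : (0:ℝ) ≤ ((k:ℝ)+1)/(n:ℝ) := by positivity
      refine HasWind.transport (IH hk) ?_ ?_ ?_ ?_
      · simp only [cir_loop]
      · refine hc.comp (continuous_const.mul (cir_continuous r)).continuousOn ?_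
        intro t _
        exact hmem _ hk0' hk1' t
      · simp only [cir_loop]
      · intro t _
        have hx : ((((k:ℝ)+1)/(n:ℝ) : ℝ) : ℂ) * cir r t ∈ closedBall (0:ℂ) r :=
          hmem _ hk0' hk1' t
        have hy : (((k:ℝ)/(n:ℝ) : ℝ) : ℂ) * cir r t ∈ closedBall (0:ℂ) r :=
          hmem _ hk0 hkk t
        have hdist : dist (((((k:ℝ)+1)/(n:ℝ) : ℝ) : ℂ) * cir r t)
            ((((k:ℝ)/(n:ℝ) : ℝ) : ℂ) * cir r t) < d := by
          rw [dist_eq_norm, ← sub_mul, norm_mul,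
            abs_cir r hr.le]
          have : ((((k:ℝ)+1)/(n:ℝ) : ℝ) : ℂ) - (((k:ℝ)/(n:ℝ) : ℝ) : ℂ) = ((1/(n:ℝ) : ℝ) : ℂ) := by
            rw [← Complex.ofReal_sub]
            congr 1
            field_simp; ring
          rw [this, Complex.norm_real, Real.norm_eq_abs, _root_.abs_of_nonneg (by positivity)]
          calc 1/(n:ℝ) * r = r / n := by ring
          _ < d := hrn
        have := hdd _ hx _ hy hdist
        rw [Complex.dist_eq] at this
        calc ‖ψ (((((k:ℝ)+1)/(n:ℝ) : ℝ) : ℂ) * cir r t)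
              - ψ ((((k:ℝ)/(n:ℝ) : ℝ) : ℂ) * cir r t)‖ < m := this
        _ ≤ ‖ψ ((((k:ℝ)/(n:ℝ) : ℝ) : ℂ) * cir r t)‖ := hmin hy
  have := key n le_rfl
  have hnn : ((n:ℝ)/(n:ℝ) : ℝ) = 1 := div_self (ne_of_gt hn0)
  simpa [hnn] using this


/-- The loop `t ↦ cir r t - z₀` winds once around the origin when `|z₀| < r`. -/
lemma hasWind_sub_interior {r : ℝ} (hr : 0 < r) {z₀ : ℂ} (hz₀ : ‖z₀‖ < r) :
    HasWind (fun t => cir r t - z₀) 1 := by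
  set E : ℝ → ℂ := fun t => Complex.exp (((2 * Real.pi * t : ℝ) : ℂ) * Complex.I) with hE
  have hEne : ∀ t, E t ≠ 0 := fun t => Complex.exp_ne_zero _
  have hEabs : ∀ t, ‖E t‖ = 1 := fun t => Complex.norm_exp_ofReal_mul_I _
  have hEcont : Continuous E :=
    Complex.continuous_exp.comp ((Complex.continuous_ofReal.comp (by continuity)).mul continuous_const)
  set w : ℝ → ℂ := fun t => 1 - z₀ / r * (E t)⁻¹ with hw
  have hwabs : ∀ t, ‖w t - 1‖ < 1 := by
    intro t
    have : w t - 1 = -(z₀ / r * (E t)⁻¹) := by rw [hw]; ring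
    rw [this, norm_neg, norm_mul, norm_div, norm_inv, hEabs, Complex.norm_real, Real.norm_eq_abs,
      _root_.abs_of_nonneg hr.le]
    simpa using (div_lt_one hr).mpr hz₀
  have hwne : ∀ t, w t ≠ 0 := by
    intro t h0
    have := hwabs t
    rw [h0] at this
    simp at this
  have hfac : ∀ t, cir r t - z₀ = (r : ℂ) * E t * w t := by
    intro t
    rw [hw, hE]
    have hrne : (r : ℂ) ≠ 0 := by exact_mod_cast hr.ne'
    field_simp [cir]; rfl
  refine ⟨fun t => (Real.log r : ℂ) + ((2 * Real.pi * t : ℝ) : ℂ) * Complex.I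
      + Complex.log (w t), ?_, fun t _ => ?_, ?_⟩
  · refine (continuousOn_const.add (Continuous.continuousOn (by continuity))).add ?_
    intro t _
    refine ContinuousAt.continuousWithinAt ?_
    refine (continuousAt_clog ?_).comp ?_
    · exact Complex.mem_slitPlane_iff.mpr (Or.inl (re_pos_of_abs_lt_one (hwabs t)))
    · exact (continuous_const.sub (continuous_const.mul (hEcont.inv₀ hEne))).continuousAt
  · show Complex.exp ((Real.log r : ℂ) + ((2 * Real.pi * t : ℝ) : ℂ) * Complex.I
        + Complex.log (w t)) = cir r t - z₀
    rw [Complex.exp_add, Complex.exp_add, Complex.exp_log (hwne t), hfac t]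
    congr 2
    rw [← Complex.ofReal_exp, Real.exp_log hr]
  · have hE10 : E 1 = E 0 := by
      show Complex.exp (((2 * Real.pi * 1 : ℝ) : ℂ) * Complex.I)
          = Complex.exp (((2 * Real.pi * 0 : ℝ) : ℂ) * Complex.I)
      rw [show (((2 * Real.pi * 1 : ℝ)) : ℂ) * Complex.I = 2 * Real.pi * Complex.I by
          push_cast; ring, Complex.exp_two_pi_mul_I,
        show (((2 * Real.pi * 0 : ℝ)) : ℂ) * Complex.I = 0 by push_cast; ring, Complex.exp_zero]
    have hw10 : w 1 = w 0 := by
      show (1 : ℂ) - z₀ / r * (E 1)⁻¹ = 1 - z₀ / r * (E 0)⁻¹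
      rw [hE10]
    show (Real.log r : ℂ) + ((2 * Real.pi * 1 : ℝ) : ℂ) * Complex.I + Complex.log (w 1)
        - ((Real.log r : ℂ) + ((2 * Real.pi * 0 : ℝ) : ℂ) * Complex.I + Complex.log (w 0))
        = 2 * Real.pi * Complex.I * ((1 : ℤ) : ℂ)
    rw [hw10]
    push_cast
    ring


lemma hasWind_sub_pow {r : ℝ} (hr : 0 < r) {z₀ : ℂ} (hz₀ : ‖z₀‖ < r) (m : ℕ) :
    HasWind (fun t => (cir r t - z₀) ^ m) m := by
  induction m with
  | zero => simpa using hasWind_const 1 one_ne_zero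
  | succ m IH =>
    push_cast
    simp only [pow_succ]
    have := IH.mul (hasWind_sub_interior hr hz₀)
    exact this

lemma rmem_sphere {r : ℝ} (hr : 0 < r) : (r : ℂ) ∈ sphere (0:ℂ) r := by
  simp [mem_sphere_iff_norm, Complex.norm_real, _root_.abs_of_nonneg hr.le]

lemma not_eventually_zero {r r' : ℝ} (hr : 0 < r) (hrr' : r < r') {ψ : ℂ → ℂ}
    (hψ : AnalyticOnNhd ℂ ψ (ball (0:ℂ) r'))
    (hsph : ∀ z ∈ sphere (0:ℂ) r, ψ z ≠ 0) :
    ∀ z ∈ ball (0:ℂ) r', ¬ (∀ᶠ w in nhds z, ψ w = 0) := by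
  intro z hz hev
  have heq := hψ.eqOn_zero_of_preconnected_of_eventuallyEq_zero
    ((convex_ball (0:ℂ) r').isPreconnected) hz hev
  refine hsph r (rmem_sphere hr) ?_
  have hmem : (r : ℂ) ∈ ball (0:ℂ) r' := by
    simp [mem_ball_zero_iff, Complex.norm_real, _root_.abs_of_nonneg hr.le, hrr']
  exact heq hmem

lemma zeros_finite {r r' : ℝ} (hr : 0 < r) (hrr' : r < r') {ψ : ℂ → ℂ}
    (hψ : AnalyticOnNhd ℂ ψ (ball (0:ℂ) r'))
    (hsph : ∀ z ∈ sphere (0:ℂ) r, ψ z ≠ 0) :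
    {z ∈ closedBall (0:ℂ) r | ψ z = 0}.Finite := by
  have hsub : closedBall (0:ℂ) r ⊆ ball (0:ℂ) r' := closedBall_subset_ball hrr'
  set Z := {z ∈ closedBall (0:ℂ) r | ψ z = 0} with hZ
  have hZeq : Z = closedBall (0:ℂ) r ∩ ψ ⁻¹' {0} := by
    ext z; simp [hZ, Set.mem_sep_iff]
  have hclosed : IsClosed Z := by
    rw [hZeq]
    exact (hψ.continuousOn.mono hsub).preimage_isClosed_of_isClosed
      Metric.isClosed_closedBall isClosed_singleton
  have hcpt : IsCompact Z :=
    (isCompact_closedBall (0:ℂ) r).of_isClosed_subset hclosed fun z hz => hz.1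
  refine hcpt.finite ?_
  rw [isDiscrete_iff_nhdsNE]
  intro x hx
  rcases (hψ x (hsub hx.1)).eventually_eq_zero_or_eventually_ne_zero with hev | hev
  · exact absurd hev (not_eventually_zero hr hrr' hψ hsph x (hsub hx.1))
  · rw [Filter.inf_eq_bot_iff]
    refine ⟨{w | ψ w ≠ 0}, hev, Z, Filter.mem_principal_self Z, ?_⟩
    ext w
    simp only [Set.mem_inter_iff, Set.mem_setOf_eq, Set.mem_empty_iff_false, iff_false]
    rintro ⟨hw1, hw2⟩
    exact hw1 hw2.2

lemma analyticOnNhd_iterate_dslope {U : Set ℂ} {ψ : ℂ → ℂ}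
    (hψ : AnalyticOnNhd ℂ ψ U) (z₀ : ℂ) :
    ∀ m : ℕ, AnalyticOnNhd ℂ ((Function.swap dslope z₀)^[m] ψ) U := by
  intro m
  induction m with
  | zero => exact hψ
  | succ j IHj =>
    rw [Function.iterate_succ_apply']
    intro z hz
    rcases eq_or_ne z z₀ with rfl | hzne
    · obtain ⟨p, hp⟩ := IHj z hz
      exact ⟨p.fslope, hp.has_fpower_series_dslope_fslope⟩
    · have hana : AnalyticAt ℂ (fun w => (w - z₀)⁻¹
          * ((Function.swap dslope z₀)^[j] ψ w - (Function.swap dslope z₀)^[j] ψ z₀)) z := by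
        refine AnalyticAt.mul ?_ ((IHj z hz).sub analyticAt_const)
        exact (analyticAt_id.sub analyticAt_const).inv (sub_ne_zero.mpr hzne)
      refine hana.congr ?_
      filter_upwards [isOpen_ne.mem_nhds hzne] with w hw
      rw [Function.swap, dslope_of_ne _ hw, slope_def_field]
      field_simp

/-- Winding number of an analytic function on the boundary circle is nonnegative, and positive
if the function has a zero in the closed disc. -/
lemma exists_hasWind_analytic {r r' : ℝ} (hr : 0 < r) (hrr' : r < r') :
    ∀ (N : ℕ) (ψ : ℂ → ℂ), AnalyticOnNhd ℂ ψ (ball (0:ℂ) r') →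
    (∀ z ∈ sphere (0:ℂ) r, ψ z ≠ 0) →
    {z ∈ closedBall (0:ℂ) r | ψ z = 0}.ncard ≤ N →
    ∃ k : ℤ, HasWind (fun t => ψ (cir r t)) k ∧ 0 ≤ k ∧
      ((∃ z ∈ closedBall (0:ℂ) r, ψ z = 0) → 1 ≤ k) := by
  have hsub : closedBall (0:ℂ) r ⊆ ball (0:ℂ) r' := closedBall_subset_ball hrr'
  intro N
  induction N with
  | zero =>
    intro ψ hψ hsph hcard
    have hfin := zeros_finite hr hrr' hψ hsph
    have hemp : {z ∈ closedBall (0:ℂ) r | ψ z = 0} = ∅ := by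
      rwa [← Set.ncard_eq_zero hfin, ← Nat.le_zero]
    have hne : ∀ z ∈ closedBall (0:ℂ) r, ψ z ≠ 0 := by
      intro z hz h0
      have : z ∈ ({z ∈ closedBall (0:ℂ) r | ψ z = 0} : Set ℂ) := ⟨hz, h0⟩
      rw [hemp] at this
      exact this
    refine ⟨0, hasWind_zero_of_nonvanishing hr (hψ.continuousOn.mono hsub) hne, le_refl _, ?_⟩
    rintro ⟨z, hz, h0⟩
    exact absurd h0 (hne z hz)
  | succ N IH =>
    intro ψ hψ hsph hcard
    have hfin := zeros_finite hr hrr' hψ hsph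
    by_cases hemp : {z ∈ closedBall (0:ℂ) r | ψ z = 0} = ∅
    · have hne : ∀ z ∈ closedBall (0:ℂ) r, ψ z ≠ 0 := by
        intro z hz h0
        have : z ∈ ({z ∈ closedBall (0:ℂ) r | ψ z = 0} : Set ℂ) := ⟨hz, h0⟩
        rw [hemp] at this
        exact this
      refine ⟨0, hasWind_zero_of_nonvanishing hr (hψ.continuousOn.mono hsub) hne, le_refl _, ?_⟩
      rintro ⟨z, hz, h0⟩
      exact absurd h0 (hne z hz)
    · obtain ⟨z₀, hz₀⟩ := Set.nonempty_iff_ne_empty.mpr hemp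
      obtain ⟨hz₀b, hz₀0⟩ := hz₀
      have hz₀lt : ‖z₀‖ < r := by
        rcases lt_or_eq_of_le (mem_closedBall_zero_iff.mp hz₀b) with h | h
        · exact h
        · exact absurd hz₀0 (hsph z₀ (by simpa [mem_sphere_iff_norm] using h))
      obtain ⟨p, hp⟩ := hψ z₀ (hsub hz₀b)
      have hpne : p ≠ 0 := by
        intro h0
        refine not_eventually_zero hr hrr' hψ hsph z₀ (hsub hz₀b) ?_
        exact HasFPowerSeriesAt.eventually_eq_zero (h0 ▸ hp)
      set n : ℕ := p.order with hn
      have hcoeff0 : p.coeff 0 = 0 := by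
        have := hp.coeff_zero (fun _ => 1)
        rwa [hz₀0] at this
      have hn0 : n ≠ 0 := by
        intro h0
        have := p.apply_order_ne_zero hpne
        rw [← hn, h0] at this
        exact this (FormalMultilinearSeries.coeff_eq_zero.mp hcoeff0)
      set φ : ℂ → ℂ := (Function.swap dslope z₀)^[n] ψ with hφ
      have hφz₀ : φ z₀ ≠ 0 := hp.iterate_dslope_fslope_ne_zero hpne
      -- intermediate iterates vanish at z₀
      have hval : ∀ j, j < n → ((Function.swap dslope z₀)^[j] ψ) z₀ = 0 := by
        intro j hj
        have hq := hp.has_fpower_series_iterate_dslope_fslope j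
        rw [← hq.coeff_zero 1]
        have hz : (FormalMultilinearSeries.fslope^[j] p).coeff 0 = 0 := by
          rw [FormalMultilinearSeries.coeff_iterate_fslope,
            FormalMultilinearSeries.coeff_eq_zero]
          exact FormalMultilinearSeries.apply_eq_zero_of_lt_order (by simpa using hj)
        exact hz
      -- global factorization
      have hfacne : ∀ j, j ≤ n → ∀ z, z ≠ z₀ →
          ψ z = (z - z₀) ^ j * ((Function.swap dslope z₀)^[j] ψ) z := by
        intro j
        induction j with
        | zero => intro _ z _; simp
        | succ j IHj =>
          intro hj z hz
          have hj' : j ≤ n := le_of_lt (Nat.lt_of_succ_le hj)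
          rw [Function.iterate_succ_apply', Function.swap,
            dslope_of_ne _ hz, slope_def_field, hval j (Nat.lt_of_succ_le hj)]
          rw [IHj hj' z hz]
          field_simp [sub_ne_zero.mpr hz]
          ring
      have hfac : ∀ z, ψ z = (z - z₀) ^ n * φ z := by
        intro z
        rcases eq_or_ne z z₀ with rfl | hz
        · rw [hz₀0, sub_self, zero_pow hn0, zero_mul]
        · exact hfacne n le_rfl z hz
      -- φ is analytic on the ball
      have hφana : AnalyticOnNhd ℂ φ (ball (0:ℂ) r') :=
        analyticOnNhd_iterate_dslope hψ z₀ n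
      have hφsph : ∀ z ∈ sphere (0:ℂ) r, φ z ≠ 0 := by
        intro z hz h0
        exact hsph z hz (by rw [hfac z, h0, mul_zero])
      have hsubset : {z ∈ closedBall (0:ℂ) r | φ z = 0}
          ⊆ {z ∈ closedBall (0:ℂ) r | ψ z = 0} \ {z₀} := by
        rintro z ⟨hzb, hzz⟩
        refine ⟨⟨hzb, by rw [hfac z, hzz, mul_zero]⟩, ?_⟩
        simp only [Set.mem_singleton_iff]
        rintro rfl
        exact hφz₀ hzz
      have hφcard : {z ∈ closedBall (0:ℂ) r | φ z = 0}.ncard ≤ N := by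
        have h1 : {z ∈ closedBall (0:ℂ) r | φ z = 0}.ncard
            ≤ ({z ∈ closedBall (0:ℂ) r | ψ z = 0} \ {z₀}).ncard :=
          Set.ncard_le_ncard hsubset hfin.diff
        have h2 : ({z ∈ closedBall (0:ℂ) r | ψ z = 0} \ {z₀}).ncard
            = {z ∈ closedBall (0:ℂ) r | ψ z = 0}.ncard - 1 :=
          Set.ncard_diff_singleton_of_mem ⟨hz₀b, hz₀0⟩
        omega
      obtain ⟨k', hwφ, hk'0, -⟩ := IH φ hφana hφsph hφcard
      have hw : HasWind (fun t => (cir r t - z₀) ^ n * φ (cir r t)) ((n : ℤ) + k') :=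
        (hasWind_sub_pow hr hz₀lt n).mul hwφ
      have heq : (fun t => ψ (cir r t)) = fun t => (cir r t - z₀) ^ n * φ (cir r t) :=
        funext fun t => hfac (cir r t)
      refine ⟨(n : ℤ) + k', heq ▸ hw, ?_, fun _ => ?_⟩
      · positivity
      · have h1 : (1 : ℤ) ≤ (n : ℤ) := by exact_mod_cast Nat.one_le_iff_ne_zero.mpr hn0
        omega

end RoucheAux
end

open RoucheAux

/-- α-version of the Rouché-type theorem: with `|f| > |g|` on the circle `|z| = r` and
`0 < |α| < inf_{|z|=r}(|f(z)| - |g(z)|)`, if `f` has a zero in the open disc then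
`f - g` takes the value `α` in the open disc. -/
theorem rouche_type_alpha
    (r : ℝ) (hr : 0 < r) (f g : ℂ → ℂ)
    (U : Set ℂ) (hU : IsOpen U) (hUr : closedBall (0 : ℂ) r ⊆ U)
    (hf : DifferentiableOn ℂ f U)
    (hg : ContinuousOn g (closedBall (0 : ℂ) r))
    (hfg : ∀ z : ℂ, ‖z‖ = r → ‖g z‖ < ‖f z‖)
    (α : ℂ) (hα0 : 0 < ‖α‖)
    (hαinf : ‖α‖ <
      sInf ((fun z => ‖f z‖ - ‖g z‖) '' sphere (0 : ℂ) r))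
    (z₀ : ℂ) (hz₀ : ‖z₀‖ < r) (hfz₀ : f z₀ = 0) :
    ∃ z' : ℂ, ‖z'‖ < r ∧ f z' - g z' = α := by
  by_contra hcon
  push_neg at hcon
  -- enlarge the closed ball slightly inside U
  obtain ⟨d, hd, hsubU⟩ :=
    (isCompact_closedBall (0:ℂ) r).exists_cthickening_subset_open hU hUr
  set r' : ℝ := r + d with hr'
  have hrr' : r < r' := by simp [hr']; linarith
  have hballU : ball (0:ℂ) r' ⊆ U := by
    refine Subset.trans ball_subset_closedBall (Subset.trans ?_ hsubU)
    rw [cthickening_closedBall hd.le hr.le (0:ℂ)]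
    exact subset_of_eq (by rw [hr']; ring_nf)
  have hana : AnalyticOnNhd ℂ f (ball (0:ℂ) r') :=
    (hf.mono hballU).analyticOnNhd isOpen_ball
  have hsphU : sphere (0:ℂ) r ⊆ U := sphere_subset_closedBall.trans hUr
  -- the infimum bound on the sphere
  have hsphere_bound : ∀ z ∈ sphere (0:ℂ) r,
      ‖α‖ < ‖f z‖ - ‖g z‖ := by
    intro z hz
    refine lt_of_lt_of_le hαinf (csInf_le ?_ ⟨z, hz, rfl⟩)
    refine IsCompact.bddBelow_image (isCompact_sphere (0:ℂ) r) ?_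
    exact (continuous_norm.comp_continuousOn (hf.continuousOn.mono hsphU)).sub
      (continuous_norm.comp_continuousOn (hg.mono sphere_subset_closedBall))
  set F : ℂ → ℂ := fun z => f z - g z - α with hF
  have hFcont : ContinuousOn F (closedBall (0:ℂ) r) :=
    (((hf.mono hUr).continuousOn).sub hg).sub continuousOn_const
  have hFne : ∀ z ∈ closedBall (0:ℂ) r, F z ≠ 0 := by
    intro z hz h0
    have h0' : f z - g z = α := by
      have : f z - g z - α = 0 := h0
      linear_combination this
    rcases lt_or_eq_of_le (mem_closedBall_zero_iff.mp hz) with hlt | heq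
    · exact hcon z hlt h0'
    · have hzs : z ∈ sphere (0:ℂ) r := by simpa [mem_sphere_zero_iff_norm] using heq
      have hb := hsphere_bound z hzs
      have h1 : ‖f z‖ ≤ ‖g z‖ + ‖α‖ := by
        have hfz : f z = g z + α := by linear_combination h0'
        rw [hfz]
        exact norm_add_le _ _
      linarith
  -- f does not vanish on the sphere
  have habs : ∀ z ∈ sphere (0:ℂ) r, ‖z‖ = r := by
    intro z hz
    exact mem_sphere_zero_iff_norm.mp hz
  have hfsph : ∀ z ∈ sphere (0:ℂ) r, f z ≠ 0 := by
    intro z hz h0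
    have := hfg z (habs z hz)
    rw [h0] at this
    simp only [norm_zero] at this
    exact absurd this (not_lt.mpr (norm_nonneg _))
  have hzmem : z₀ ∈ closedBall (0:ℂ) r :=
    mem_closedBall_zero_iff.mpr (by exact hz₀.le)
  -- winding of f on the circle is at least 1
  obtain ⟨k, hwf, hk0, hk1⟩ := exists_hasWind_analytic hr hrr'
    ({z ∈ closedBall (0:ℂ) r | f z = 0}.ncard) f hana hfsph le_rfl
  have hk : 1 ≤ k := hk1 ⟨z₀, hzmem, hfz₀⟩
  -- winding of F on the circle is 0, but transport says it is k
  have hwF : HasWind (fun t => F (cir r t)) 0 :=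
    hasWind_zero_of_nonvanishing hr hFcont hFne
  have hwF' : HasWind (fun t => F (cir r t)) k := by
    refine hwf.transport ?_ ?_ ?_ ?_
    · simp [cir_loop]
    · exact hFcont.comp (cir_continuous r).continuousOn
        fun t _ => sphere_subset_closedBall (cir_mem_sphere r hr.le t)
    · simp [cir_loop]
    · intro t _
      set z : ℂ := cir r t with hz
      have hzs : z ∈ sphere (0:ℂ) r := cir_mem_sphere r hr.le t
      have hb := hsphere_bound z hzs
      have h1 : F z - f z = -(g z + α) := by rw [hF]; ring
      rw [h1, norm_neg]
      calc ‖g z + α‖ ≤ ‖g z‖ + ‖α‖ := norm_add_le _ _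
      _ < ‖f z‖ := by linarith
  have := hasWind_unique hwF' hwF
  omega
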